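/- Let σ = (σ_0,…,σ_n) be a changemaker vector, let x be a positive integer, and let a ≥ 1 and b ≥ 0 be integers. If 2a ≤ x²p + x|σ|₁, T^σ_{a−1} < T^σ_a, and T^σ_b = T^σ_{a−1}, then a − b ≤ x. -/

import Mathlib

open Finset

/-- `σ` is a changemaker vector: all entries are positive and every integer `k` with
`0 ≤ k ≤ σ_0 + ⋯ + σ_n` is the sum of a subset of the entries. -/
def IsChangemaker {n : ℕ} (σ : Fin (n + 1) → ℕ) : Prop :=
  (∀ i, 0 < σ i) ∧
    ∀ k : ℕ, k ≤ ∑ i, σ i → ∃ A : Finset (Fin (n + 1)), ∑ i ∈ A, σ i = k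

/-- `Tcm σ m = T^σ_m`, the maximum of `σ·α` over all `α ∈ ℤ_{≥0}^{n+1}` with
`Σ_j α_j (α_j + 1) ≤ 2m` (the maximum exists: the set is nonempty and bounded). -/
noncomputable def Tcm {n : ℕ} (σ : Fin (n + 1) → ℕ) (m : ℕ) : ℕ :=
  sSup {t : ℕ | ∃ α : Fin (n + 1) → ℕ,
    (∑ j, α j * (α j + 1)) ≤ 2 * m ∧ t = ∑ j, σ j * α j}

/-- `Vcm σ i = V^σ_i`, the `i`-th relevant coefficient of `σ`:
the least `m` with `T^σ_m ≥ i` (and `V^σ_0 = 0`). -/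
noncomputable def Vcm {n : ℕ} (σ : Fin (n + 1) → ℕ) (i : ℕ) : ℕ :=
  sInf {m : ℕ | i ≤ Tcm σ m}

lemma tcm_bddAbove {n : ℕ} (σ : Fin (n + 1) → ℕ) (m : ℕ) :
    BddAbove {t : ℕ | ∃ α : Fin (n + 1) → ℕ,
      (∑ j, α j * (α j + 1)) ≤ 2 * m ∧ t = ∑ j, σ j * α j} := by
  refine ⟨(∑ j, σ j) * (2 * m), ?_⟩
  rintro t ⟨α, hc, rfl⟩
  calc ∑ j, σ j * α j ≤ ∑ j, σ j * (2 * m) := by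
        apply Finset.sum_le_sum
        intro j _
        have h1 : α j ≤ α j * (α j + 1) := Nat.le_mul_of_pos_right _ (Nat.succ_pos _)
        have h2 : α j * (α j + 1) ≤ 2 * m :=
          le_trans (Finset.single_le_sum (f := fun j => α j * (α j + 1))
            (fun i _ => Nat.zero_le _) (mem_univ j)) hc
        exact Nat.mul_le_mul_left _ (le_trans h1 h2)
    _ = (∑ j, σ j) * (2 * m) := by rw [← Finset.sum_mul]

lemma tcm_nonempty {n : ℕ} (σ : Fin (n + 1) → ℕ) (m : ℕ) :
    Set.Nonempty {t : ℕ | ∃ α : Fin (n + 1) → ℕ,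
      (∑ j, α j * (α j + 1)) ≤ 2 * m ∧ t = ∑ j, σ j * α j} :=
  ⟨0, fun _ => 0, by simp⟩

lemma tcm_mem {n : ℕ} (σ : Fin (n + 1) → ℕ) (m : ℕ) :
    Tcm σ m ∈ {t : ℕ | ∃ α : Fin (n + 1) → ℕ,
      (∑ j, α j * (α j + 1)) ≤ 2 * m ∧ t = ∑ j, σ j * α j} :=
  Nat.sSup_mem (tcm_nonempty σ m) (tcm_bddAbove σ m)

lemma le_tcm {n : ℕ} (σ : Fin (n + 1) → ℕ) (m : ℕ) (α : Fin (n + 1) → ℕ)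
    (h : (∑ j, α j * (α j + 1)) ≤ 2 * m) : (∑ j, σ j * α j) ≤ Tcm σ m :=
  le_csSup (tcm_bddAbove σ m) ⟨α, h, rfl⟩

lemma tcm_mono {n : ℕ} (σ : Fin (n + 1) → ℕ) {m m' : ℕ} (h : m ≤ m') :
    Tcm σ m ≤ Tcm σ m' := by
  obtain ⟨α, hc, hv⟩ := tcm_mem σ m
  rw [hv]
  exact le_tcm σ m' α (le_trans hc (by omega))

theorem stmt_4 {n : ℕ} (σ : Fin (n + 1) → ℕ) (hσ : IsChangemaker σ)
    (x : ℕ) (hx : 0 < x) (a b : ℕ) (ha : 1 ≤ a)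
    (h2a : 2 * a ≤ x ^ 2 * (∑ i, (σ i) ^ 2) + x * (∑ i, σ i))
    (hT : Tcm σ (a - 1) < Tcm σ a)
    (hTb : Tcm σ b = Tcm σ (a - 1)) :
    a ≤ b + x := by
  set t := Tcm σ (a - 1) with ht
  set a' := Vcm σ t with ha'
  -- a' ≤ a - 1 and a' ≤ b
  have hne : (a - 1) ∈ {m : ℕ | t ≤ Tcm σ m} := le_refl t
  have ha'le : a' ≤ a - 1 := Nat.sInf_le hne
  have ha'b : a' ≤ b := Nat.sInf_le (by rw [Set.mem_setOf_eq, hTb])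
  have hTa' : Tcm σ a' = t := by
    have h1 : t ≤ Tcm σ a' := Nat.sInf_mem (⟨a - 1, hne⟩ : Set.Nonempty _)
    have h2 : Tcm σ a' ≤ t := tcm_mono σ ha'le
    omega
  -- extract an optimal α at level a'
  obtain ⟨α, hc, hv⟩ := tcm_mem σ a'
  rw [hTa'] at hv
  -- cost of α is < x^2 p + x |σ|₁
  have hclt : (∑ j, α j * (α j + 1)) < x ^ 2 * (∑ i, (σ i) ^ 2) + x * (∑ i, σ i) := by
    have : 2 * a' ≤ 2 * (a - 1) := by omega
    omega
  -- there exists a deficient index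
  have hdef : ∃ j, α j + 1 ≤ x * σ j := by
    by_contra h
    push_neg at h
    have hge : ∀ j, x * σ j ≤ α j := fun j => by have := h j; omega
    have : x ^ 2 * (∑ i, (σ i) ^ 2) + x * (∑ i, σ i) ≤ ∑ j, α j * (α j + 1) := by
      calc x ^ 2 * (∑ i, (σ i) ^ 2) + x * (∑ i, σ i)
          = ∑ j, (x * σ j) * (x * σ j + 1) := by
            rw [Finset.mul_sum, Finset.mul_sum, ← Finset.sum_add_distrib]
            apply Finset.sum_congr rfl
            intro j _; ring
        _ ≤ ∑ j, α j * (α j + 1) := by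
            apply Finset.sum_le_sum
            intro j _
            exact Nat.mul_le_mul (hge j) (by have := hge j; omega)
    omega
  -- pick a deficient index with minimal σ value
  set D : Finset (Fin (n + 1)) := univ.filter (fun j => α j + 1 ≤ x * σ j) with hD
  have hDne : D.Nonempty := by
    obtain ⟨j, hj⟩ := hdef
    exact ⟨j, by simp [hD, hj]; omega⟩
  obtain ⟨j₀, hj₀D, hj₀min⟩ := Finset.exists_min_image D σ hDne
  have hj₀def : α j₀ + 1 ≤ x * σ j₀ := by
    simpa [hD] using hj₀D
  have hs1 : 1 ≤ σ j₀ := hσ.1 j₀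
  obtain ⟨s', hs'⟩ : ∃ s', σ j₀ = s' + 1 := ⟨σ j₀ - 1, by omega⟩
  -- subset A summing to σ j₀ - 1 = s'
  have hs'le : s' ≤ ∑ i, σ i := by
    have : σ j₀ ≤ ∑ i, σ i :=
      Finset.single_le_sum (fun i _ => Nat.zero_le _) (mem_univ j₀)
    omega
  obtain ⟨A, hA⟩ := hσ.2 s' hs'le
  -- every element of A has σ < σ j₀, hence is non-deficient
  have hAlt : ∀ i ∈ A, σ i ≤ s' := by
    intro i hi
    have : σ i ≤ ∑ i ∈ A, σ i :=
      Finset.single_le_sum (fun i _ => Nat.zero_le _) hi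
    omega
  have hAnd : ∀ i ∈ A, x * σ i ≤ α i := by
    intro i hi
    by_contra h
    have hiD : i ∈ D := by
      simp only [hD, mem_filter, mem_univ, true_and]; omega
    have := hj₀min i hiD
    have := hAlt i hi
    omega
  have hApos : ∀ i ∈ A, 1 ≤ α i := by
    intro i hi
    have h1 := hAnd i hi
    have h2 := hσ.1 i
    nlinarith
  have hj₀A : j₀ ∉ A := by
    intro h
    have := hAlt j₀ h
    omega
  -- the modified vector
  set α' : Fin (n + 1) → ℕ :=
    fun j => if j = j₀ then α j + 1 else if j ∈ A then α j - 1 else α j with hα'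
  -- value computation
  have hval : (∑ j, σ j * α' j) + (∑ i ∈ A, σ i) = (∑ j, σ j * α j) + σ j₀ := by
    have key : ∀ j, σ j * α' j + (if j ∈ A then σ j else 0)
        = σ j * α j + (if j = j₀ then σ j else 0) := by
      intro j
      by_cases hj : j = j₀
      · subst hj
        simp only [hα', if_pos rfl, if_neg hj₀A, if_true, eq_self_iff_true]
        ring
      · by_cases hA' : j ∈ A
        · simp only [hα', if_neg hj, if_pos hA']
          obtain ⟨c, hc'⟩ : ∃ c, α j = c + 1 := ⟨α j - 1, by have := hApos j hA'; omega⟩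
          rw [hc']
          simp
          ring
        · simp [hα', hj, hA']
    calc (∑ j, σ j * α' j) + (∑ i ∈ A, σ i)
        = ∑ j, (σ j * α' j + (if j ∈ A then σ j else 0)) := by
          rw [Finset.sum_add_distrib]
          congr 1
          simp [Finset.sum_ite_mem]
      _ = ∑ j, (σ j * α j + (if j = j₀ then σ j else 0)) :=
          Finset.sum_congr rfl (fun j _ => key j)
      _ = (∑ j, σ j * α j) + σ j₀ := by
          rw [Finset.sum_add_distrib]
          congr 1
          simp
  -- cost computation
  have hcost : (∑ j, α' j * (α' j + 1)) + 2 * (∑ i ∈ A, α i)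
      = (∑ j, α j * (α j + 1)) + 2 * (α j₀ + 1) := by
    have key : ∀ j, α' j * (α' j + 1) + (if j ∈ A then 2 * α j else 0)
        = α j * (α j + 1) + (if j = j₀ then 2 * (α j + 1) else 0) := by
      intro j
      by_cases hj : j = j₀
      · subst hj
        simp only [hα', if_pos rfl, if_neg hj₀A, if_true, eq_self_iff_true]
        ring
      · by_cases hA' : j ∈ A
        · simp only [hα', if_neg hj, if_pos hA']
          obtain ⟨c, hc'⟩ : ∃ c, α j = c + 1 := ⟨α j - 1, by have := hApos j hA'; omega⟩
          rw [hc']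
          simp
          ring
        · simp [hα', hj, hA']
    calc (∑ j, α' j * (α' j + 1)) + 2 * (∑ i ∈ A, α i)
        = ∑ j, (α' j * (α' j + 1) + (if j ∈ A then 2 * α j else 0)) := by
          rw [Finset.sum_add_distrib, Finset.mul_sum]
          congr 1
          simp [Finset.sum_ite_mem, Finset.mul_sum]
      _ = ∑ j, (α j * (α j + 1) + (if j = j₀ then 2 * (α j + 1) else 0)) :=
          Finset.sum_congr rfl (fun j _ => key j)
      _ = (∑ j, α j * (α j + 1)) + 2 * (α j₀ + 1) := by
          rw [Finset.sum_add_distrib]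
          congr 1
          simp
  -- bound the cost of α'
  have hAα : x * s' ≤ ∑ i ∈ A, α i := by
    calc x * s' = ∑ i ∈ A, x * σ i := by rw [← Finset.mul_sum, hA]
      _ ≤ ∑ i ∈ A, α i := Finset.sum_le_sum hAnd
  have hxs : x * σ j₀ = x * s' + x := by rw [hs']; ring
  have hc' : (∑ j, α' j * (α' j + 1)) ≤ 2 * (a' + x) := by omega
  -- α' witnesses T_{a'+x} ≥ t + 1
  have hval' : (∑ j, σ j * α' j) = t + 1 := by
    rw [hA] at hval
    omega
  have hTnew : t + 1 ≤ Tcm σ (a' + x) := by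
    rw [← hval']
    exact le_tcm σ (a' + x) α' hc'
  -- conclude
  by_contra h
  push_neg at h
  have : a' + x ≤ a - 1 := by omega
  have := tcm_mono σ this
  omega
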